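/- Let F be a field of characteristic 2. For a, b ∈ F, the F-algebras F[x]/(x² + x + a) and F[y]/(y² + y + b) are isomorphic if and only if a − b ∈ ℘(F), where ℘(F) = {r + r² : r ∈ F}. -/

import Mathlib

open Polynomial

section Aux

variable {F : Type*} [Field F] [CharP F 2]

private lemma quad_monic (a : F) : (X ^ 2 + X + C a : F[X]).Monic := by
  rw [add_assoc]
  apply monic_X_pow_add
  apply lt_of_le_of_lt (degree_add_le _ _)
  rw [degree_X]
  exact max_lt (by norm_num) (lt_of_le_of_lt (degree_C_le) (by norm_num))

private lemma quad_deg (a : F) : (X ^ 2 + X + C a : F[X]).degree = 2 := by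
  compute_degree!

private lemma two0 (b : F) : (2 : AdjoinRoot (X ^ 2 + X + C b)) = 0 := by
  rw [← map_ofNat (algebraMap F (AdjoinRoot (X ^ 2 + X + C b))) 2,
    show ((OfNat.ofNat 2 : F) = 0) from CharTwo.two_eq_zero, map_zero]

private lemma root_rel (b : F) :
    (AdjoinRoot.root (X ^ 2 + X + C b)) ^ 2 + AdjoinRoot.root (X ^ 2 + X + C b)
      + algebraMap F _ b = 0 := by
  have h := AdjoinRoot.mk_self (f := (X ^ 2 + X + C b : F[X]))
  simpa [map_add, map_pow, AdjoinRoot.mk_X, AdjoinRoot.mk_C, AdjoinRoot.algebraMap_eq] using h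

private lemma indep (b : F) {e f : F}
    (h : algebraMap F (AdjoinRoot (X ^ 2 + X + C b)) e
        + algebraMap F _ f * AdjoinRoot.root (X ^ 2 + X + C b) = 0) :
    e = 0 ∧ f = 0 := by
  have h2 : AdjoinRoot.mk (X ^ 2 + X + C b) (C e + C f * X) = 0 := by
    simpa [map_add, map_mul, AdjoinRoot.mk_X, AdjoinRoot.mk_C, AdjoinRoot.algebraMap_eq] using h
  rw [AdjoinRoot.mk_eq_zero] at h2
  have hdeg : (C e + C f * X : F[X]).degree < (X ^ 2 + X + C b : F[X]).degree := by
    rw [quad_deg]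
    apply lt_of_le_of_lt (degree_add_le _ _)
    apply max_lt (lt_of_le_of_lt degree_C_le (by norm_num))
    apply lt_of_le_of_lt (degree_mul_le _ _)
    apply lt_of_le_of_lt (add_le_add degree_C_le degree_X_le)
    norm_num
  have h0 := eq_zero_of_dvd_of_degree_lt h2 hdeg
  constructor
  · have := congrArg (fun p => coeff p 0) h0
    simpa using this
  · have := congrArg (fun p => coeff p 1) h0
    simpa using this

private lemma decomp (b : F) (t : AdjoinRoot (X ^ 2 + X + C b)) :
    ∃ c d : F, t = algebraMap F _ c
      + algebraMap F _ d * AdjoinRoot.root (X ^ 2 + X + C b) := by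
  obtain ⟨p, rfl⟩ := AdjoinRoot.mk_surjective t
  have hm := quad_monic b
  refine ⟨(p %ₘ (X ^ 2 + X + C b)).coeff 0, (p %ₘ (X ^ 2 + X + C b)).coeff 1, ?_⟩
  have h1 : AdjoinRoot.mk (X ^ 2 + X + C b) p
      = AdjoinRoot.mk _ (p %ₘ (X ^ 2 + X + C b)) := by
    conv_lhs => rw [← modByMonic_add_div p (X ^ 2 + X + C b)]
    rw [map_add, map_mul, AdjoinRoot.mk_self, zero_mul, add_zero]
  have hdeg : (p %ₘ (X ^ 2 + X + C b)).degree ≤ 1 := by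
    have h2 := degree_modByMonic_lt p hm
    rw [quad_deg] at h2
    exact Order.lt_succ_iff.mp h2
  rw [h1]
  conv_lhs => rw [eq_X_add_C_of_degree_le_one hdeg]
  rw [map_add, map_mul, AdjoinRoot.mk_X, AdjoinRoot.mk_C, AdjoinRoot.mk_C,
    AdjoinRoot.algebraMap_eq]
  ring

private lemma aeval_cond {a b r : F} (h : a - b = r + r ^ 2) :
    aeval (AdjoinRoot.root (X ^ 2 + X + C b) + algebraMap F _ r) (X ^ 2 + X + C a : F[X]) = 0 := by
  have hrel := root_rel b
  have h2 := two0 b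
  have ha : a = b + r + r ^ 2 := by linear_combination h
  have haK : algebraMap F (AdjoinRoot (X ^ 2 + X + C b)) a
      = algebraMap F _ b + algebraMap F _ r + (algebraMap F _ r) ^ 2 := by
    rw [ha]; simp [map_add, map_pow]
  simp only [map_add, map_pow, aeval_X, aeval_C]
  linear_combination hrel + haK
    + (AdjoinRoot.root (X ^ 2 + X + C b) * algebraMap F _ r
        + (algebraMap F (AdjoinRoot (X ^ 2 + X + C b)) r) ^ 2
        + algebraMap F (AdjoinRoot (X ^ 2 + X + C b)) r) * h2

private lemma algmap_add_self {K : Type*} [CommRing K] [Algebra F K] {r : F}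
    (hr0 : r + r = 0) : algebraMap F K r + algebraMap F K r = 0 := by
  rw [← map_add, hr0, map_zero]

end Aux

/-- Over a field of characteristic 2, F[x]/(x²+x+a) ≅ F[y]/(y²+y+b) iff
a - b lies in the Artin–Schreier group ℘(F) = {r + r² : r ∈ F}. -/
theorem char_two_artin_schreier_classification
    (F : Type*) [Field F] [CharP F 2] (a b : F) :
    Nonempty (AdjoinRoot (X ^ 2 + X + C a) ≃ₐ[F] AdjoinRoot (X ^ 2 + X + C b)) ↔
      ∃ r : F, a - b = r + r ^ 2 := by
  have htwoF : (2 : F) = 0 := CharTwo.two_eq_zero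
  constructor
  · rintro ⟨φ⟩
    obtain ⟨c, d, ht⟩ := decomp b (φ (AdjoinRoot.root (X ^ 2 + X + C a)))
    have hrel_b := root_rel b
    have h2 := two0 b
    have ht0 : (φ (AdjoinRoot.root (X ^ 2 + X + C a))) ^ 2
        + φ (AdjoinRoot.root (X ^ 2 + X + C a)) + algebraMap F _ a = 0 := by
      have h5 := congrArg φ (root_rel a)
      simp only [map_add, map_pow, map_zero, AlgEquiv.commutes] at h5
      exact h5
    rw [ht] at ht0
    set ρ := AdjoinRoot.root (X ^ 2 + X + C b)
    have key : algebraMap F (AdjoinRoot (X ^ 2 + X + C b)) (c ^ 2 + c + a + d ^ 2 * b)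
        + algebraMap F _ (d ^ 2 + d) * ρ = 0 := by
      simp only [map_add, map_mul, map_pow]
      linear_combination ht0 - (algebraMap F (AdjoinRoot (X ^ 2 + X + C b)) d) ^ 2 * hrel_b
        + ((algebraMap F (AdjoinRoot (X ^ 2 + X + C b)) d) ^ 2 * algebraMap F _ b
          + (algebraMap F (AdjoinRoot (X ^ 2 + X + C b)) d) ^ 2 * ρ
          - algebraMap F (AdjoinRoot (X ^ 2 + X + C b)) c * algebraMap F _ d * ρ) * h2
    obtain ⟨hc, hd⟩ := indep b key
    have hd' : d = 0 ∨ d = 1 := by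
      have : d * (d + 1) = 0 := by linear_combination hd
      rcases mul_eq_zero.mp this with h | h
      · exact Or.inl h
      · right; linear_combination -h + d * htwoF
    rcases hd' with rfl | rfl
    · -- φ root_a is a scalar: contradicts surjectivity
      exfalso
      simp only [map_zero, zero_mul, add_zero] at ht
      obtain ⟨x, hx⟩ := φ.surjective ρ
      have hxmem : x ∈ Algebra.adjoin F {AdjoinRoot.root (X ^ 2 + X + C a)} := by
        rw [AdjoinRoot.adjoinRoot_eq_top]; trivial
      have himg : φ x ∈ (Algebra.adjoin F
          {AdjoinRoot.root (X ^ 2 + X + C a)}).map φ.toAlgHom := ⟨x, hxmem, rfl⟩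
      rw [AlgHom.map_adjoin, Set.image_singleton] at himg
      change φ x ∈ Algebra.adjoin F {φ (AdjoinRoot.root (X ^ 2 + X + C a))} at himg
      rw [ht] at himg
      have hbot : φ x ∈ (⊥ : Subalgebra F (AdjoinRoot (X ^ 2 + X + C b))) := by
        refine Algebra.adjoin_le ?_ himg
        intro y hy
        rw [Set.mem_singleton_iff] at hy
        subst hy
        exact Algebra.mem_bot.mpr ⟨c, rfl⟩
      obtain ⟨s, hs⟩ := Algebra.mem_bot.mp hbot
      rw [hx] at hs
      have h9 : algebraMap F (AdjoinRoot (X ^ 2 + X + C b)) s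
          + algebraMap F _ (-1) * ρ = 0 := by
        rw [map_neg, map_one, hs]; ring
      have h01 := (indep b h9).2
      norm_num at h01
    · refine ⟨c, ?_⟩
      linear_combination -hc + a * htwoF
  · rintro ⟨r, h⟩
    have h' : b - a = r + r ^ 2 := by linear_combination -h - (r + r ^ 2) * htwoF
    have hr0 : r + r = 0 := by linear_combination r * htwoF
    refine ⟨AlgEquiv.ofAlgHom (AdjoinRoot.liftAlgHom _ (Algebra.ofId _ _) _ (by rw [Algebra.toRingHom_ofId, ← aeval_def]; exact aeval_cond h))
      (AdjoinRoot.liftAlgHom _ (Algebra.ofId _ _) _ (by rw [Algebra.toRingHom_ofId, ← aeval_def]; exact aeval_cond h')) ?_ ?_⟩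
    · apply AdjoinRoot.algHom_ext
      simp only [AlgHom.coe_comp, Function.comp_apply, AdjoinRoot.liftAlgHom_root, map_add,
        AdjoinRoot.liftAlgHom_root, AlgHom.commutes, AlgHom.coe_id, id_eq]
      linear_combination algmap_add_self (K := AdjoinRoot (X ^ 2 + X + C b)) hr0
    · apply AdjoinRoot.algHom_ext
      simp only [AlgHom.coe_comp, Function.comp_apply, AdjoinRoot.liftAlgHom_root, map_add,
        AdjoinRoot.liftAlgHom_root, AlgHom.commutes, AlgHom.coe_id, id_eq]
      linear_combination algmap_add_self (K := AdjoinRoot (X ^ 2 + X + C a)) hr0
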